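/- Euler's identity for the q-exponential: in the ring ℤ[[q]][[x]] of formal power series in x over ℤ[[q]], one has ∏_{j=1}^{∞} (1 − q^j x) = Σ_{n=0}^{∞} (−1)^n q^{n(n+1)/2} x^n / (q;q)_n, where the infinite product converges in the x-adic topology (equivalently, the coefficient of each monomial x^n q^d stabilizes). -/

import Mathlib

/-!
STATEMENT 9 (Euler's identity for the q-exponential).  Work in ℤ[[q]][[x]],
i.e. `PowerSeries (PowerSeries ℤ)`: the inner variable is `q := PowerSeries.X
: PowerSeries ℤ` and the outer variable is `x := PowerSeries.X : PowerSeries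
(PowerSeries ℤ)`; `q` is viewed in ℤ[[q]][[x]] via the constant-coefficient
embedding `PowerSeries.C`.  `(q;q)_n = ∏_{j=1}^n (1 - q^j)` is a unit of
ℤ[[q]]; `Ring.inverse` yields its inverse.

The infinite product `∏_{j=1}^∞ (1 − q^j x)` converges in the x-adic (indeed
(q,x)-adic) topology: the coefficient of `x^n q^d` in the partial products
`∏_{j=1}^{J} (1 − q^j x)` is stable for `J ≥ d` (any factor `1 − q^j x` with
`j > d` cannot contribute to `q^d`), so the product is encoded as the double
power series whose `x^n q^d`-coefficient is that stable value (we use the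
partial product with `J = d + 1`).

The statement: `∏_{j=1}^∞ (1 − q^j x) = Σ_{n≥0} (−1)^n q^{n(n+1)/2} x^n /
(q;q)_n`; note the right-hand side is the double power series whose `x^n`
coefficient is exactly `(−1)^n q^{n(n+1)/2} / (q;q)_n ∈ ℤ[[q]]`.
-/

noncomputable section
open PowerSeries

/-- `(q;q)_n = ∏_{j=1}^n (1 - q^j)`. -/
def qPoch (n : ℕ) : PowerSeries ℤ :=
  ∏ j ∈ Finset.range n, (1 - (X : PowerSeries ℤ) ^ (j + 1))

/-- The infinite product `∏_{j=1}^∞ (1 − q^j x)` in ℤ[[q]][[x]], encoded by its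
stabilized coefficients: the `x^n q^d` coefficient is that of any partial
product `∏_{j=1}^{J} (1 − q^j x)` with `J ≥ d`. -/
def eulerProd : PowerSeries (PowerSeries ℤ) :=
  PowerSeries.mk fun n => PowerSeries.mk fun d =>
    coeff (R := ℤ) d (coeff (R := PowerSeries ℤ) n
      (∏ j ∈ Finset.range (d + 1),
        (1 - PowerSeries.C (R := PowerSeries ℤ) ((X : PowerSeries ℤ) ^ (j + 1)) *
          (X : PowerSeries (PowerSeries ℤ)))))

namespace Stmt9Aux

/-- Partial product `P J = ∏_{j=1}^J (1 - q^j x)`. -/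
def P (J : ℕ) : PowerSeries (PowerSeries ℤ) :=
  ∏ j ∈ Finset.range J,
    (1 - PowerSeries.C (R := PowerSeries ℤ) ((X : PowerSeries ℤ) ^ (j + 1)) *
      (X : PowerSeries (PowerSeries ℤ)))

/-- `c J n` = coefficient of `x^n` in `P J`. -/
def c (J n : ℕ) : PowerSeries ℤ := coeff (R := PowerSeries ℤ) n (P J)

/-- The stabilized limit coefficient series. -/
def a (n : ℕ) : PowerSeries ℤ := PowerSeries.mk fun d => coeff (R := ℤ) d (c (d + 1) n)

lemma rescale_C' (r b : PowerSeries ℤ) :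
    rescale b (PowerSeries.C (R := PowerSeries ℤ) r) = PowerSeries.C (R := PowerSeries ℤ) r := by
  ext d
  rw [coeff_rescale]
  rcases d with _ | d
  · simp
  · simp [coeff_C]

/-- substitution recurrence: `P (J+1) = (1 - q x) · (P J)(q x)` -/
lemma P_succ' (J : ℕ) :
    P (J + 1) = (1 - PowerSeries.C (R := PowerSeries ℤ) ((X : PowerSeries ℤ)) *
      (X : PowerSeries (PowerSeries ℤ))) * rescale (X : PowerSeries ℤ) (P J) := by
  rw [P, Finset.prod_range_succ', mul_comm]
  congr 1
  · rw [pow_one]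
  · rw [P, map_prod]
    refine Finset.prod_congr rfl fun j _ => ?_
    rw [map_sub, map_one, map_mul, rescale_C', rescale_X, ← mul_assoc, ← map_mul, ← pow_succ]

/-- tail recurrence -/
lemma P_succ (J : ℕ) :
    P (J + 1) = P J * (1 - PowerSeries.C (R := PowerSeries ℤ) ((X : PowerSeries ℤ) ^ (J + 1)) *
      (X : PowerSeries (PowerSeries ℤ))) := Finset.prod_range_succ _ _

lemma c_zero (J : ℕ) : c J 0 = 1 := by
  rw [c, coeff_zero_eq_constantCoeff, P, map_prod]
  simp

lemma c_succ_tail (J n : ℕ) :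
    c (J + 1) (n + 1) = c J (n + 1) - (X : PowerSeries ℤ) ^ (J + 1) * c J n := by
  have h : P J * (PowerSeries.C (R := PowerSeries ℤ) ((X : PowerSeries ℤ) ^ (J + 1)) * X)
      = PowerSeries.C (R := PowerSeries ℤ) ((X : PowerSeries ℤ) ^ (J + 1)) * (X * P J) := by
    ring
  rw [c, c, c, P_succ, mul_sub, mul_one, map_sub, h, coeff_C_mul, coeff_succ_X_mul]

lemma c_succ_sub (J n : ℕ) :
    c (J + 1) (n + 1) = (X : PowerSeries ℤ) ^ (n + 1) * c J (n + 1)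
      - (X : PowerSeries ℤ) ^ (n + 1) * c J n := by
  have h : (1 - PowerSeries.C (R := PowerSeries ℤ) (X : PowerSeries ℤ) * X) *
        rescale (X : PowerSeries ℤ) (P J)
      = rescale (X : PowerSeries ℤ) (P J)
        - PowerSeries.C (R := PowerSeries ℤ) (X : PowerSeries ℤ) *
          (X * rescale (X : PowerSeries ℤ) (P J)) := by
    ring
  rw [c, c, c, P_succ', h, map_sub, coeff_rescale, coeff_C_mul, coeff_succ_X_mul,
    coeff_rescale, ← mul_assoc, ← pow_succ']

/-- stabilization -/
lemma stab {d J : ℕ} (h : d < J) (n : ℕ) :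
    coeff (R := ℤ) d (c J n) = coeff (R := ℤ) d (c (d + 1) n) := by
  induction J, h using Nat.le_induction with
  | base => rfl
  | succ J hJ ih =>
    rw [← ih]
    cases n with
    | zero => rw [c_zero, c_zero]
    | succ n =>
      rw [c_succ_tail, map_sub]
      have h0 : coeff (R := ℤ) d ((X : PowerSeries ℤ) ^ (J + 1) * c J n) = 0 :=
        (X_pow_dvd_iff.mp (dvd_mul_right _ _)) d (by omega)
      rw [h0, sub_zero]

lemma coeff_a (n d : ℕ) : coeff (R := ℤ) d (a n) = coeff (R := ℤ) d (c (d + 1) n) := coeff_mk _ _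

/-- truncation congruence for products -/
lemma coeff_mul_congr (d : ℕ) (g f₁ f₂ : PowerSeries ℤ)
    (h : ∀ e ≤ d, coeff (R := ℤ) e f₁ = coeff (R := ℤ) e f₂) :
    coeff (R := ℤ) d (g * f₁) = coeff (R := ℤ) d (g * f₂) := by
  rw [coeff_mul, coeff_mul]
  refine Finset.sum_congr rfl fun p hp => ?_
  have hp2 : p.2 ≤ d := by
    have := Finset.HasAntidiagonal.mem_antidiagonal.mp hp
    omega
  rw [h p.2 hp2]

lemma key (n : ℕ) :
    (1 - (X : PowerSeries ℤ) ^ (n + 1)) * a (n + 1)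
      = -((X : PowerSeries ℤ) ^ (n + 1)) * a n := by
  ext d
  have L : coeff (R := ℤ) d ((1 - (X : PowerSeries ℤ) ^ (n + 1)) * a (n + 1))
      = coeff (R := ℤ) d ((1 - (X : PowerSeries ℤ) ^ (n + 1)) * c (d + 1) (n + 1)) :=
    coeff_mul_congr d _ _ _ fun e he =>
      (coeff_a _ _).trans ((stab (show e < d + 1 by omega) (n + 1)).symm)
  have R : coeff (R := ℤ) d (-((X : PowerSeries ℤ) ^ (n + 1)) * a n)
      = coeff (R := ℤ) d (-((X : PowerSeries ℤ) ^ (n + 1)) * c (d + 1) n) :=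
    coeff_mul_congr d _ _ _ fun e he =>
      (coeff_a _ _).trans ((stab (show e < d + 1 by omega) n).symm)
  rw [L, R]
  have E : (1 - (X : PowerSeries ℤ) ^ (n + 1)) * c (d + 1) (n + 1)
        - -((X : PowerSeries ℤ) ^ (n + 1)) * c (d + 1) n
      = c (d + 1) (n + 1) - c (d + 2) (n + 1) := by
    have hc := c_succ_sub (d + 1) n
    rw [show d + 1 + 1 = d + 2 from rfl] at hc
    rw [hc]
    ring
  have h0 : coeff (R := ℤ) d (c (d + 1) (n + 1) - c (d + 2) (n + 1)) = 0 := by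
    rw [map_sub, stab (show d < d + 2 by omega) (n + 1), sub_self]
  have h1 := congrArg (coeff (R := ℤ) d) E
  rw [map_sub, h0] at h1
  exact sub_eq_zero.mp h1

lemma a_zero : a 0 = 1 := by
  ext d
  simp [a, c_zero, coeff_one]

lemma qPoch_mul_a (n : ℕ) :
    qPoch n * a n = (-1 : PowerSeries ℤ) ^ n * (X : PowerSeries ℤ) ^ (n * (n + 1) / 2) := by
  induction n with
  | zero => simp [qPoch, a_zero]
  | succ n ih =>
    have harith : (n + 1) * (n + 1 + 1) / 2 = (n + 1) + n * (n + 1) / 2 := by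
      have h := Nat.triangle_succ (n + 1)
      simp only [Nat.add_sub_cancel] at h
      rw [show (n+1+1) = n+2 from rfl, mul_comm (n+1) (n+2), h, mul_comm (n+1) n]
      omega
    calc qPoch (n + 1) * a (n + 1)
        = qPoch n * ((1 - (X : PowerSeries ℤ) ^ (n + 1)) * a (n + 1)) := by
          rw [qPoch, Finset.prod_range_succ, ← qPoch]; ring
      _ = qPoch n * (-((X : PowerSeries ℤ) ^ (n + 1)) * a n) := by rw [key]
      _ = -((X : PowerSeries ℤ) ^ (n + 1)) * (qPoch n * a n) := by ring
      _ = -((X : PowerSeries ℤ) ^ (n + 1)) *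
            ((-1 : PowerSeries ℤ) ^ n * (X : PowerSeries ℤ) ^ (n * (n + 1) / 2)) := by rw [ih]
      _ = (-1 : PowerSeries ℤ) ^ (n + 1) * (X : PowerSeries ℤ) ^ ((n + 1) * (n + 1 + 1) / 2) := by
          rw [harith, pow_add, pow_succ]; ring

lemma isUnit_qPoch (n : ℕ) : IsUnit (qPoch n) := by
  rw [PowerSeries.isUnit_iff_constantCoeff, qPoch, map_prod]
  simp

lemma a_eq (n : ℕ) :
    a n = (-1 : PowerSeries ℤ) ^ n * (X : PowerSeries ℤ) ^ (n * (n + 1) / 2) *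
      Ring.inverse (qPoch n) := by
  have hu := isUnit_qPoch n
  calc a n = Ring.inverse (qPoch n) * (qPoch n * a n) := by
        rw [← mul_assoc, Ring.inverse_mul_cancel _ hu, one_mul]
    _ = _ := by rw [qPoch_mul_a]; ring

end Stmt9Aux

theorem stmt9 :
    eulerProd = PowerSeries.mk fun n =>
      ((-1 : PowerSeries ℤ) ^ n * (X : PowerSeries ℤ) ^ (n * (n + 1) / 2) *
        Ring.inverse (qPoch n)) := by
  have h : eulerProd = PowerSeries.mk fun n => Stmt9Aux.a n := rfl
  rw [h]
  exact congrArg PowerSeries.mk (funext Stmt9Aux.a_eq)
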